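/- Let G be a simple graph, v a vertex of G, and let x and y be adjacent vertices of G with dist(v,x) = dist(v,y) = i for some finite i ≥ 1. Then G contains an odd cycle of length at most 2i+1 all of whose vertices are at distance at most i from v. -/

import Mathlib

open SimpleGraph

private lemma rotate_support_subset' {V : Type*} [DecidableEq V] {G : SimpleGraph V} {u z : V}
    (c : G.Walk u u) (h : z ∈ c.support) : (c.rotate z h).support ⊆ c.support := by
  intro a ha
  rw [Walk.rotate, Walk.support_append] at ha
  rcases List.mem_append.1 ha with h1 | h2
  · exact c.support_dropUntil_subset h h1
  · exact c.support_takeUntil_subset h (List.mem_of_mem_tail h2)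

private lemma length_rotate' {V : Type*} [DecidableEq V] {G : SimpleGraph V} {u z : V}
    (c : G.Walk u u) (h : z ∈ c.support) : (c.rotate z h).length = c.length := by
  conv_rhs => rw [← c.take_spec h]
  rw [Walk.rotate, Walk.length_append, Walk.length_append]
  omega

private lemma edge_not_mem_of_path' {V : Type*} {G : SimpleGraph V} {c u : V}
    (q : G.Walk c u) (hq : q.support.Nodup) (hne : u ≠ c) (hlen : 2 ≤ q.length) :
    s(u, c) ∉ q.edges := by
  cases q with
  | nil => simp
  | @cons _ b _ h' q' =>
    intro hmem
    rw [Walk.edges_cons, List.mem_cons] at hmem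
    rw [Walk.support_cons, List.nodup_cons] at hq
    rcases hmem with heq | hmem
    · rw [Sym2.eq_iff] at heq
      rcases heq with ⟨h1, _⟩ | ⟨h1, _⟩
      · exact hne h1
      · subst h1
        have : q' = Walk.nil := (Walk.isPath_iff_eq_nil (p := q')).1 (Walk.IsPath.mk' hq.2)
        subst this
        simp at hlen
    · exact hq.1 (q'.snd_mem_support_of_mem_edges hmem)

private lemma exists_odd_cycle_of_odd_closed_walk' {V : Type*} [DecidableEq V] {G : SimpleGraph V} :
    ∀ (n : ℕ) {u : V} (w : G.Walk u u), w.length = n → Odd n →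
    ∃ (a : V) (c : G.Walk a a), c.IsCycle ∧ Odd c.length ∧ c.length ≤ w.length ∧
      ∀ z ∈ c.support, z ∈ w.support := by
  classical
  intro n
  induction n using Nat.strong_induction_on with
  | _ n ih =>
    intro u w hlen hodd
    by_cases hnodup : w.support.tail.Nodup
    · -- `w` is itself a cycle
      cases w with
      | nil =>
        simp only [Walk.length_nil] at hlen
        subst hlen
        exact absurd hodd (by simp)
      | @cons _ c _ h q =>
        have hq : q.support.Nodup := by simpa using hnodup
        have hq2 : 2 ≤ q.length := by
          rcases Nat.lt_or_ge q.length 2 with hlt | hge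
          · interval_cases hl : q.length
            · exact absurd (Walk.eq_of_length_eq_zero hl) h.ne'
            · exfalso
              rw [Walk.length_cons, hl] at hlen
              subst hlen
              simp [Nat.odd_iff] at hodd
          · exact hge
        have hcyc : (Walk.cons h q).IsCycle := by
          rw [Walk.cons_isCycle_iff]
          exact ⟨Walk.IsPath.mk' hq, edge_not_mem_of_path' q hq h.ne hq2⟩
        exact ⟨u, _, hcyc, hlen ▸ hodd, le_refl _, fun z hz => hz⟩
    · -- there is a repeated vertex; split the walk
      rw [List.nodup_iff_forall_not_duplicate] at hnodup
      push_neg at hnodup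
      obtain ⟨z, hzdup⟩ := hnodup
      have hz2 : 2 ≤ w.support.tail.count z := List.duplicate_iff_two_le_count.1 hzdup
      have hzmem : z ∈ w.support := List.mem_of_mem_tail hzdup.mem
      have hrotlen : (w.rotate z hzmem).length = n := by rw [length_rotate', hlen]
      have hrotnn : ¬ (w.rotate z hzmem).Nil := by
        rw [Walk.not_nil_iff_lt_length, hrotlen]
        rcases hodd with ⟨k, hk⟩; omega
      obtain ⟨b, hadj, q, hq⟩ := Walk.not_nil_iff.1 hrotnn
      have hcount : 2 ≤ q.support.count z := by
        have hperm : List.Perm (w.rotate z hzmem).support.tail w.support.tail :=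
          (Walk.support_rotate w z hzmem).perm
        have := hperm.count_eq z
        have hq' : (w.rotate z hzmem).support.tail = q.support := by
          rw [hq, Walk.support_cons]; rfl
        rw [hq'] at this
        omega
      have hzq : z ∈ q.support := by
        rw [← List.count_pos_iff]; omega
      have hqlen : q.length + 1 = n := by
        rw [← hrotlen, hq, Walk.length_cons]
      -- the two pieces
      have hsum : (q.takeUntil z hzq).length + (q.dropUntil z hzq).length = q.length := by
        conv_rhs => rw [← q.take_spec hzq]
        rw [Walk.length_append]
      have hdrop1 : 1 ≤ (q.dropUntil z hzq).length := by
        by_contra hcon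
        push_neg at hcon
        have h0 : (q.dropUntil z hzq).length = 0 := by omega
        have hsupp : q.support = (q.takeUntil z hzq).support ++
            (q.dropUntil z hzq).support.tail := by
          conv_lhs => rw [← q.take_spec hzq]
          rw [Walk.support_append]
        have htake1 : (q.takeUntil z hzq).support.count z = 1 :=
          q.count_support_takeUntil_eq_one hzq
        have htl : (q.dropUntil z hzq).support.tail = [] := by
          have := (q.dropUntil z hzq).length_support
          rw [h0] at this
          cases hsupp' : (q.dropUntil z hzq).support with
          | nil => simp
          | cons a l =>
            rw [hsupp'] at this
            simp at this
            simp [this]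
        rw [hsupp, htl, List.count_append] at hcount
        simp [htake1] at hcount
      set c1 := Walk.cons hadj (q.takeUntil z hzq) with hc1
      set c2 := q.dropUntil z hzq with hc2
      have hc1len : c1.length = (q.takeUntil z hzq).length + 1 := by
        rw [hc1, Walk.length_cons]
      have hsub1 : c1.support ⊆ w.support := by
        intro a ha
        rw [hc1, Walk.support_cons, List.mem_cons] at ha
        rcases ha with rfl | ha
        · exact hzmem
        · have : a ∈ q.support := q.support_takeUntil_subset hzq ha
          have : a ∈ (w.rotate z hzmem).support := by
            rw [hq, Walk.support_cons]
            exact List.mem_cons_of_mem _ this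
          exact rotate_support_subset' w hzmem this
      have hsub2 : c2.support ⊆ w.support := by
        intro a ha
        have : a ∈ q.support := q.support_dropUntil_subset hzq ha
        have : a ∈ (w.rotate z hzmem).support := by
          rw [hq, Walk.support_cons]
          exact List.mem_cons_of_mem _ this
        exact rotate_support_subset' w hzmem this
      have hn1 : Odd n := hodd
      rw [Nat.odd_iff] at hn1
      rcases Nat.even_or_odd c1.length with he1 | ho1
      · -- then c2 is odd
        have ho2 : Odd c2.length := by
          rw [Nat.even_iff] at he1
          rw [Nat.odd_iff]
          omega
        have hlt2 : c2.length < n := by omega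
        obtain ⟨a, c, hc, hco, hcl, hcs⟩ := ih c2.length hlt2 c2 rfl ho2
        exact ⟨a, c, hc, hco, by omega, fun z' hz' => hsub2 (hcs z' hz')⟩
      · have hlt1 : c1.length < n := by omega
        obtain ⟨a, c, hc, hco, hcl, hcs⟩ := ih c1.length hlt1 c1 rfl ho1
        exact ⟨a, c, hc, hco, by omega, fun z' hz' => hsub1 (hcs z' hz')⟩

/-- If `x` and `y` are adjacent and both at distance exactly
`i ≥ 1` from `v`, then `G` contains an odd cycle of length at most `2i+1` all of
whose vertices are at distance at most `i` from `v`. -/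
theorem adjacent_in_same_bfs_layer_gives_short_odd_cycle
    {V : Type*} (G : SimpleGraph V) (v x y : V) (i : ℕ) (hi : 1 ≤ i)
    (hadj : G.Adj x y)
    (hx : G.Reachable v x) (hdx : G.dist v x = i)
    (hy : G.Reachable v y) (hdy : G.dist v y = i) :
    ∃ (u : V) (c : G.Walk u u), c.IsCycle ∧ Odd c.length ∧
      c.length ≤ 2 * i + 1 ∧
      ∀ z ∈ c.support, ∃ p : G.Walk v z, p.length ≤ i := by
  classical
  obtain ⟨p, hp⟩ := hx.exists_walk_length_eq_dist
  obtain ⟨q, hq⟩ := hy.exists_walk_length_eq_dist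
  rw [hdx] at hp
  rw [hdy] at hq
  set w : G.Walk v v := p.append (Walk.cons hadj q.reverse) with hw
  have hwlen : w.length = 2 * i + 1 := by
    rw [hw, Walk.length_append, Walk.length_cons, Walk.length_reverse, hp, hq]
    omega
  have hwodd : Odd w.length := by rw [hwlen]; exact ⟨i, by omega⟩
  obtain ⟨a, c, hc, hco, hcl, hcs⟩ :=
    exists_odd_cycle_of_odd_closed_walk' w.length w rfl hwodd
  refine ⟨a, c, hc, hco, by omega, fun z hz => ?_⟩
  have hzw : z ∈ w.support := hcs z hz
  rw [hw, Walk.mem_support_append_iff] at hzw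
  rcases hzw with hzp | hzc
  · refine ⟨p.takeUntil z hzp, ?_⟩
    calc (p.takeUntil z hzp).length ≤ p.length := p.length_takeUntil_le hzp
      _ = i := hp
  · rw [Walk.support_cons, List.mem_cons] at hzc
    rcases hzc with rfl | hzq
    · exact ⟨p, by omega⟩
    · rw [Walk.support_reverse, List.mem_reverse] at hzq
      refine ⟨q.takeUntil z hzq, ?_⟩
      calc (q.takeUntil z hzq).length ≤ q.length := q.length_takeUntil_le hzq
        _ = i := hq
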